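/- Suppose the marginal value distribution satisfies MHR, the retention distribution satisfies retention regularity, and in the case p_ret ≤ p^Myerson the Myerson threshold price p_ret is charged. Then the single-round revenue of Myerson Threshold pricing is at least (1/e) times the single-round revenue of the known-types seller, and every player retained under the known-types optimal prices is also retained under MT pricing. -/

import Mathlib

/-- Single-round guarantee for Myerson Threshold (MT) pricing: with an MHR marginal
value distribution (CDF `F`, density `f`, marginal values `(1−γ)v`) and a retention
distribution satisfying retention regularity determining the threshold price
`p_ret`, MT pricing (charging `min(p_ret, p_M)` where `p_M` is the Myerson optimal
posted price) earns at least a `1/e` fraction of the known-types single-round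
revenue `E[min((1−γ)v, p_ret)]`, and every player retained under the known-types
prices is also retained under MT pricing. -/
theorem MT_pricing_single_round
    (v β pret pM : ℝ) (hv : 0 < v) (hβ : β ∈ Set.Ioo (0:ℝ) 1)
    (Fr fr : ℝ → ℝ)
    (hFr' : ∀ x : ℝ, HasDerivAt Fr (fr x) x)
    (hfrpos : ∀ x : ℝ, 0 ≤ x → 0 < fr x)
    (hreg : Monotone (fun x : ℝ => x - (1 - β * Fr (v - x)) / (β * fr (v - x))))
    (hpret : pret = (1 - β * Fr (v - pret)) / (β * fr (v - pret)))
    (hpretpos : 0 < pret)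
    (F f : ℝ → ℝ)
    (hF0 : F 0 = 0) (hFv : F v = 1) (hF1 : ∀ x : ℝ, F x ≤ 1)
    (hF' : ∀ x : ℝ, HasDerivAt F (f x) x)
    (hfnonneg : ∀ x : ℝ, 0 ≤ f x)
    (hfpos : ∀ x ∈ Set.Ioo (0:ℝ) v, 0 < f x)
    (hMHR : AntitoneOn (fun x => (1 - F x) / f x) (Set.Icc 0 v))
    (hpM : IsMaxOn (fun q => q * (1 - F q)) (Set.Ici 0) pM) (hpMpos : 0 < pM) :
    -- (1) MT revenue is at least a 1/e fraction of known-types revenue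
    (∫ x in (0:ℝ)..v, min x pret * f x)
      ≤ Real.exp 1 * (min pret pM * (1 - F (min pret pM))) ∧
    -- (2) every player retained under known-types pricing is retained under MT
    ∀ γ ∈ Set.Icc (0:ℝ) 1, ∀ rthresh : ℝ,
      rthresh ≤ max (γ * v) (v - min ((1 - γ) * v) pret) →
        rthresh ≤ max (γ * v) (v - min pret pM) := by
  have hFdiff : Differentiable ℝ F := fun x => (hF' x).differentiableAt
  have hFcont : Continuous F := hFdiff.continuous
  have hFmono : Monotone F := by
    apply monotone_of_deriv_nonneg hFdiff
    intro x; rw [(hF' x).deriv]; exact hfnonneg x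
  have hFsm : StrictMonoOn F (Set.Icc 0 v) := by
    apply strictMonoOn_of_deriv_pos (convex_Icc 0 v) hFcont.continuousOn
    intro x hx
    rw [interior_Icc] at hx
    rw [(hF' x).deriv]; exact hfpos x hx
  -- pM < v
  have hpMv : pM < v := by
    by_contra h
    push_neg at h
    have hFpM1 : F pM = 1 := le_antisymm (hF1 pM) (hFv ▸ hFmono h)
    have h2 : (v/2) * (1 - F (v/2)) ≤ pM * (1 - F pM) :=
      hpM (Set.mem_Ici.mpr (by linarith))
    rw [hFpM1] at h2
    have h3 : F (v/2) < F v :=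
      hFsm ⟨by linarith, by linarith⟩ ⟨by linarith, le_rfl⟩ (by linarith)
    rw [hFv] at h3
    nlinarith
  have hfpM : 0 < f pM := hfpos pM ⟨hpMpos, hpMv⟩
  have hFpMlt : F pM < 1 := by
    have := hFsm ⟨hpMpos.le, hpMv.le⟩ ⟨hv.le, le_rfl⟩ hpMv
    rwa [hFv] at this
  -- First-order condition at pM
  have hRderiv : HasDerivAt (fun q => q * (1 - F q)) (1 * (1 - F pM) + pM * (0 - f pM)) pM :=
    (hasDerivAt_id pM).mul ((hasDerivAt_const pM (1:ℝ)).sub (hF' pM))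
  have hcrit : 1 * (1 - F pM) + pM * (0 - f pM) = 0 :=
    (hpM.isLocalMax (Ici_mem_nhds hpMpos)).hasDerivAt_eq_zero hRderiv
  have hFOC : pM * f pM = 1 - F pM := by linarith
  -- ψ and its derivative
  set ψ : ℝ → ℝ := fun y => (1 - F y) * Real.exp (y / pM) with hψdef
  have hψ : ∀ x, HasDerivAt ψ
      ((-(f x)) * Real.exp (x / pM) + (1 - F x) * (Real.exp (x / pM) * (1/pM))) x := by
    intro x
    have h1 : HasDerivAt (fun y : ℝ => 1 - F y) (-(f x)) x := by
      simpa [Pi.sub_def] using (hasDerivAt_const x (1:ℝ)).sub (hF' x)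
    have h2 : HasDerivAt (fun y : ℝ => Real.exp (y / pM)) (Real.exp (x / pM) * (1/pM)) x := by
      have := (Real.hasDerivAt_exp (x / pM)).comp x ((hasDerivAt_id x).div_const pM)
      simpa [one_div, Function.comp_def] using this
    exact h1.mul h2
  have hψdiff : Differentiable ℝ ψ := fun x => (hψ x).differentiableAt
  have hψmono : MonotoneOn ψ (Set.Icc 0 pM) := by
    apply monotoneOn_of_deriv_nonneg (convex_Icc 0 pM) hψdiff.continuous.continuousOn
      (fun x _ => (hψdiff x).differentiableWithinAt)
    intro x hx
    rw [interior_Icc] at hx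
    rw [(hψ x).deriv]
    have hfx : 0 < f x := hfpos x ⟨hx.1, hx.2.trans hpMv⟩
    have hm := hMHR (Set.mem_Icc.mpr ⟨hx.1.le, (hx.2.trans hpMv).le⟩)
      (Set.mem_Icc.mpr ⟨hpMpos.le, hpMv.le⟩) hx.2.le
    rw [div_le_div_iff₀ hfpM hfx] at hm
    have key : pM * f x ≤ 1 - F x := by nlinarith
    have hE : 0 < Real.exp (x / pM) := Real.exp_pos _
    have h2 : pM * f x * (Real.exp (x/pM) * (1/pM)) ≤ (1 - F x) * (Real.exp (x/pM) * (1/pM)) :=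
      mul_le_mul_of_nonneg_right key (by positivity)
    have h3 : pM * f x * (Real.exp (x/pM) * (1/pM)) = f x * Real.exp (x/pM) := by
      field_simp
    linarith
  have hψanti : AntitoneOn ψ (Set.Icc pM v) := by
    apply antitoneOn_of_deriv_nonpos (convex_Icc pM v) hψdiff.continuous.continuousOn
      (fun x _ => (hψdiff x).differentiableWithinAt)
    intro x hx
    rw [interior_Icc] at hx
    rw [(hψ x).deriv]
    have hfx : 0 < f x := hfpos x ⟨hpMpos.trans hx.1, hx.2⟩
    have hm := hMHR (Set.mem_Icc.mpr ⟨hpMpos.le, hpMv.le⟩)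
      (Set.mem_Icc.mpr ⟨(hpMpos.trans hx.1).le, hx.2.le⟩) hx.1.le
    rw [div_le_div_iff₀ hfx hfpM] at hm
    have key : 1 - F x ≤ pM * f x := by nlinarith
    have hE : 0 < Real.exp (x / pM) := Real.exp_pos _
    have h2 : (1 - F x) * (Real.exp (x/pM) * (1/pM)) ≤ pM * f x * (Real.exp (x/pM) * (1/pM)) :=
      mul_le_mul_of_nonneg_right key (by positivity)
    have h3 : pM * f x * (Real.exp (x/pM) * (1/pM)) = f x * Real.exp (x/pM) := by
      field_simp
    linarith
  have hψpM : ψ pM = (1 - F pM) * Real.exp 1 := by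
    simp [hψdef, div_self hpMpos.ne']
  have hψ0 : ψ 0 = 1 := by simp [hψdef, hF0]
  -- survival upper bound : 1 - F x ≤ (1 - F pM) * e * exp(-(x/pM)) on [0, v]
  have hsurv : ∀ x ∈ Set.Icc (0:ℝ) v,
      1 - F x ≤ (1 - F pM) * Real.exp 1 * Real.exp (-(x/pM)) := by
    intro x hx
    have hψx : ψ x ≤ ψ pM := by
      rcases le_total x pM with h | h
      · exact hψmono ⟨hx.1, h⟩ ⟨hpMpos.le, le_rfl⟩ h
      · exact hψanti ⟨le_rfl, hpMv.le⟩ ⟨h, hx.2⟩ h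
    have hE : 0 < Real.exp (x / pM) := Real.exp_pos _
    have hcalc : 1 - F x = ψ x * Real.exp (-(x/pM)) := by
      rw [hψdef]
      simp only []
      rw [mul_assoc, ← Real.exp_add]
      simp
    rw [hcalc]
    exact mul_le_mul_of_nonneg_right (hψx.trans_eq hψpM) (Real.exp_pos _).le
  -- integrability facts
  have hfint : IntervalIntegrable f MeasureTheory.volume 0 v :=
    intervalIntegral.intervalIntegrable_deriv_of_nonneg hFcont.continuousOn
      (fun x _ => hF' x) (fun x _ => hfnonneg x)
  have hminint : IntervalIntegrable (fun x => min x pret * f x) MeasureTheory.volume 0 v :=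
    hfint.continuousOn_mul (continuous_id.min continuous_const).continuousOn
  have hxfint : IntervalIntegrable (fun x => x * f x) MeasureTheory.volume 0 v :=
    hfint.continuousOn_mul continuous_id.continuousOn
  have hintf : (∫ x in (0:ℝ)..v, f x) = 1 := by
    rw [intervalIntegral.integral_eq_sub_of_hasDerivAt (fun x _ => hF' x) hfint, hFv, hF0]
    ring
  constructor
  · -- part (1)
    rcases le_total pret pM with hcase | hcase
    · -- p = pret
      rw [min_eq_left hcase]
      have h1 : (∫ x in (0:ℝ)..v, min x pret * f x) ≤ ∫ x in (0:ℝ)..v, pret * f x := by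
        apply intervalIntegral.integral_mono_on hv.le hminint (hfint.const_mul pret)
        intro x _
        exact mul_le_mul_of_nonneg_right (min_le_right _ _) (hfnonneg x)
      rw [intervalIntegral.integral_const_mul, hintf, mul_one] at h1
      -- 1 - F pret ≥ exp(-1)
      have h0 : ψ 0 ≤ ψ pret := hψmono ⟨le_rfl, hpMpos.le⟩ ⟨hpretpos.le, hcase⟩ hpretpos.le
      rw [hψ0] at h0
      have hE : 0 < Real.exp (pret / pM) := Real.exp_pos _
      have h2 : Real.exp (-(pret/pM)) ≤ 1 - F pret := by
        rw [Real.exp_neg, inv_le_iff_one_le_mul₀ hE]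
        simpa [hψdef, mul_comm] using h0
      have h3 : Real.exp (-1) ≤ Real.exp (-(pret/pM)) := by
        apply Real.exp_le_exp.mpr
        have : pret / pM ≤ 1 := (div_le_one hpMpos).mpr hcase
        linarith
      have he : Real.exp 1 * Real.exp (-1) = 1 := by
        rw [← Real.exp_add]; norm_num
      have hE1 : 0 < Real.exp 1 := Real.exp_pos _
      have h5 : pret ≤ Real.exp 1 * (pret * (1 - F pret)) := by
        calc pret = (Real.exp 1 * Real.exp (-1)) * pret := by rw [he, one_mul]
          _ = (Real.exp 1 * pret) * Real.exp (-1) := by ring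
          _ ≤ (Real.exp 1 * pret) * (1 - F pret) :=
              mul_le_mul_of_nonneg_left (h3.trans h2) (by positivity)
          _ = Real.exp 1 * (pret * (1 - F pret)) := by ring
      exact h1.trans h5
    · -- p = pM
      rw [min_eq_right hcase]
      have h1 : (∫ x in (0:ℝ)..v, min x pret * f x) ≤ ∫ x in (0:ℝ)..v, x * f x := by
        apply intervalIntegral.integral_mono_on hv.le hminint hxfint
        intro x _
        exact mul_le_mul_of_nonneg_right (min_le_left _ _) (hfnonneg x)
      -- integration by parts: ∫ x f = ∫ (1 - F)
      have hFint : IntervalIntegrable F MeasureTheory.volume 0 v :=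
        hFcont.intervalIntegrable 0 v
      have hparts : (∫ x in (0:ℝ)..v, (F x + x * f x)) = v := by
        have hd : ∀ x ∈ Set.uIcc (0:ℝ) v, HasDerivAt (fun y => y * F y) (F x + x * f x) x := by
          intro x _
          have := (hasDerivAt_id x).mul (hF' x)
          simpa [add_comm, Pi.mul_def] using this
        rw [intervalIntegral.integral_eq_sub_of_hasDerivAt hd (hFint.add hxfint)]
        simp [hFv]
      have hsplit : (∫ x in (0:ℝ)..v, x * f x) = ∫ x in (0:ℝ)..v, (1 - F x) := by
        have e1 : (∫ x in (0:ℝ)..v, (F x + x * f x))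
            = (∫ x in (0:ℝ)..v, F x) + ∫ x in (0:ℝ)..v, x * f x :=
          intervalIntegral.integral_add hFint hxfint
        have e2 : (∫ x in (0:ℝ)..v, (1 - F x))
            = (∫ x in (0:ℝ)..v, (1:ℝ)) - ∫ x in (0:ℝ)..v, F x :=
          intervalIntegral.integral_sub intervalIntegrable_const hFint
        rw [intervalIntegral.integral_const] at e2
        rw [e2]
        rw [e1] at hparts
        simp only [smul_eq_mul, mul_one] at e2 ⊢
        linarith
      have h2 : (∫ x in (0:ℝ)..v, (1 - F x))
          ≤ ∫ x in (0:ℝ)..v, (1 - F pM) * Real.exp 1 * Real.exp (-(x/pM)) := by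
        apply intervalIntegral.integral_mono_on hv.le
          (intervalIntegrable_const.sub hFint)
          ((continuous_const.mul (Real.continuous_exp.comp
            ((continuous_id.div_const pM).neg))).intervalIntegrable 0 v)
        exact hsurv
      have h3 : (∫ x in (0:ℝ)..v, Real.exp (-(x/pM)))
          = pM - pM * Real.exp (-(v/pM)) := by
        have hd : ∀ x ∈ Set.uIcc (0:ℝ) v,
            HasDerivAt (fun y => -pM * Real.exp (-(y/pM))) (Real.exp (-(x/pM))) x := by
          intro x _
          have h4 : HasDerivAt (fun y : ℝ => -(y/pM)) (-(1/pM)) x := by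
            simpa [Pi.neg_def] using ((hasDerivAt_id x).div_const pM).neg
          have h5 : HasDerivAt (fun y => -pM * Real.exp (-(y/pM)))
              (-pM * (Real.exp (-(x/pM)) * -(1/pM))) x :=
            ((Real.hasDerivAt_exp (-(x/pM))).comp x h4).const_mul (-pM)
          have heq : -pM * (Real.exp (-(x/pM)) * -(1/pM)) = Real.exp (-(x/pM)) := by
            field_simp
          rw [heq] at h5
          exact h5
        rw [intervalIntegral.integral_eq_sub_of_hasDerivAt hd
          ((Real.continuous_exp.comp ((continuous_id.div_const pM).neg)).intervalIntegrable 0 v)]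
        simp only [zero_div, neg_zero, Real.exp_zero, mul_one]
        ring
      rw [intervalIntegral.integral_const_mul, h3] at h2
      have hEv : 0 < Real.exp (-(v/pM)) := Real.exp_pos _
      have hE1 : 0 < Real.exp 1 := Real.exp_pos _
      have hFpM0 : 0 ≤ 1 - F pM := by linarith
      calc (∫ x in (0:ℝ)..v, min x pret * f x)
          ≤ ∫ x in (0:ℝ)..v, x * f x := h1
        _ = ∫ x in (0:ℝ)..v, (1 - F x) := hsplit
        _ ≤ (1 - F pM) * Real.exp 1 * (pM - pM * Real.exp (-(v/pM))) := h2
        _ ≤ Real.exp 1 * (pM * (1 - F pM)) := by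
            nlinarith [mul_nonneg (mul_nonneg (mul_nonneg hFpM0 hE1.le) hpMpos.le) hEv.le]
  · -- part (2)
    intro γ hγ r hr
    rcases le_total ((1 - γ) * v) pret with h | h
    · rw [min_eq_left h] at hr
      have hg : v - (1 - γ) * v = γ * v := by ring
      rw [hg, max_self] at hr
      exact hr.trans (le_max_left _ _)
    · rw [min_eq_right h] at hr
      have : v - pret ≤ v - min pret pM := by
        have := min_le_left pret pM
        linarith
      exact hr.trans (max_le_max le_rfl this)
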